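/- Suppose u ∈ C_{+,log} is (log, x^k)-convex for some k > 0. Then L_u(r)² ≤ ℓ_u(0) · L_u(2^{k+1} r) for all r ≥ 0, where L_u(r) = Σ_{n=0}^∞ ℓ_u(n) r^n. -/

import Mathlib

noncomputable def ell (u : ℝ → ℝ) (t : ℝ) : ℝ :=
  ⨅ r : {r : ℝ // 0 < r}, u r / (r : ℝ) ^ t

lemma ell_nonneg (u : ℝ → ℝ) (hpos : ∀ r ≥ 0, 0 < u r) (t : ℝ) : 0 ≤ ell u t :=
  Real.iInf_nonneg fun r =>
    div_nonneg (hpos r r.2.le).le (Real.rpow_nonneg r.2.le t)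

lemma ell_bddBelow (u : ℝ → ℝ) (hpos : ∀ r ≥ 0, 0 < u r) (t : ℝ) :
    BddBelow (Set.range fun r : {r : ℝ // 0 < r} => u r / (r : ℝ) ^ t) :=
  ⟨0, Set.forall_mem_range.2 fun r' =>
    div_nonneg (hpos r' r'.2.le).le (Real.rpow_nonneg r'.2.le t)⟩

lemma ell_le (u : ℝ → ℝ) (hpos : ∀ r ≥ 0, 0 < u r) (t r : ℝ) (hr : 0 < r) :
    ell u t ≤ u r / r ^ t :=
  ciInf_le (ell_bddBelow u hpos t) ⟨r, hr⟩

lemma ell_mul_ell_le (u : ℝ → ℝ) (hpos : ∀ r ≥ 0, 0 < u r) (s t : ℝ) :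
    ell u s * ell u t ≤ ell u ((s + t) / 2) ^ 2 := by
  have hnn : 0 ≤ ell u s * ell u t :=
    mul_nonneg (ell_nonneg u hpos s) (ell_nonneg u hpos t)
  have hsq : Real.sqrt (ell u s * ell u t) ≤ ell u ((s + t) / 2) := by
    refine le_ciInf fun r => ?_
    have hr : (0:ℝ) < r := r.2
    have hur : 0 ≤ u r := (hpos r hr.le).le
    have h1 : ell u s * ell u t ≤ (u r / r ^ s) * (u r / r ^ t) :=
      mul_le_mul (ell_le u hpos s r hr) (ell_le u hpos t r hr)
        (ell_nonneg u hpos t) (div_nonneg hur (Real.rpow_nonneg hr.le s))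
    have h2 : (u r / r ^ s) * (u r / r ^ t) = (u r / (r:ℝ) ^ ((s+t)/2)) ^ 2 := by
      rw [div_pow, div_mul_div_comm, ← Real.rpow_add hr, ← Real.rpow_natCast ((r:ℝ) ^ ((s+t)/2)) 2,
        ← Real.rpow_mul hr.le]
      norm_num [sq]
    calc Real.sqrt (ell u s * ell u t) ≤ Real.sqrt ((u r / (r:ℝ) ^ ((s+t)/2)) ^ 2) :=
          Real.sqrt_le_sqrt (h2 ▸ h1)
      _ = u r / (r:ℝ) ^ ((s+t)/2) :=
          Real.sqrt_sq (div_nonneg hur (Real.rpow_nonneg hr.le _))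
  calc ell u s * ell u t = Real.sqrt (ell u s * ell u t) ^ 2 := (Real.sq_sqrt hnn).symm
    _ ≤ ell u ((s + t) / 2) ^ 2 := pow_le_pow_left₀ (Real.sqrt_nonneg _) hsq 2

lemma sq_ell_half_le (u : ℝ → ℝ) (k : ℝ) (hk : 0 < k)
    (hpos : ∀ r ≥ 0, 0 < u r)
    (hconv : ConvexOn ℝ (Set.Ici 0) (fun x : ℝ => Real.log (u (x ^ k))))
    (N : ℝ) (hN : 0 ≤ N) :
    ell u (N / 2) ^ 2 ≤ 2 ^ (k * N) * (ell u 0 * ell u N) := by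
  have claim : ∀ r1 > 0, ∀ r2 > 0,
      ell u (N/2) ^ 2 ≤ u r1 * (u r2 / r2 ^ N) * 2 ^ (k * N) := by
    intro r1 hr1 r2 hr2
    set x1 := r1 ^ (1/k) with hx1
    set x2 := r2 ^ (1/k) with hx2
    have hx1p : 0 < x1 := Real.rpow_pos_of_pos hr1 _
    have hx2p : 0 < x2 := Real.rpow_pos_of_pos hr2 _
    set x := (x1 + x2)/2 with hx
    have hxp : 0 < x := by positivity
    set r := x ^ k with hrr
    have hrp : 0 < r := Real.rpow_pos_of_pos hxp _
    have hx1k : x1 ^ k = r1 := by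
      rw [hx1, ← Real.rpow_mul hr1.le, one_div, inv_mul_cancel₀ hk.ne', Real.rpow_one]
    have hx2k : x2 ^ k = r2 := by
      rw [hx2, ← Real.rpow_mul hr2.le, one_div, inv_mul_cancel₀ hk.ne', Real.rpow_one]
    have hc := hconv.2 (Set.mem_Ici.mpr hx1p.le) (Set.mem_Ici.mpr hx2p.le)
      (by norm_num : (0:ℝ) ≤ 1/2) (by norm_num : (0:ℝ) ≤ 1/2) (by norm_num)
    simp only [smul_eq_mul] at hc
    have hxeq : 1/2*x1 + 1/2*x2 = x := by rw [hx]; ring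
    rw [hxeq, hx1k, hx2k] at hc
    have hu2 : u r ^ 2 ≤ u r1 * u r2 := by
      have h2 : Real.log (u r ^ 2) ≤ Real.log (u r1 * u r2) := by
        rw [Real.log_pow, Real.log_mul (hpos r1 hr1.le).ne' (hpos r2 hr2.le).ne']
        push_cast
        linarith
      exact (Real.log_le_log_iff (pow_pos (hpos r hrp.le) 2)
        (mul_pos (hpos r1 hr1.le) (hpos r2 hr2.le))).1 h2
    have hrlow : r2 / 2 ^ k ≤ r := by
      have hxx : x2 / 2 ≤ x := by rw [hx]; linarith
      calc r2 / 2^k = (x2/2)^k := by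
            rw [Real.div_rpow hx2p.le (by norm_num), hx2k]
        _ ≤ x ^ k := Real.rpow_le_rpow (by positivity) hxx hk.le
    have hrN : r2 ^ N / 2 ^ (k*N) ≤ r ^ N := by
      calc r2 ^ N / 2^(k*N) = (r2/2^k) ^ N := by
            rw [Real.div_rpow hr2.le (Real.rpow_nonneg (by norm_num) k),
              ← Real.rpow_mul (by norm_num : (0:ℝ) ≤ 2)]
        _ ≤ r ^ N := Real.rpow_le_rpow (by positivity) hrlow hN
    have h3 : ell u (N/2) ≤ u r / r ^ (N/2) := ell_le u hpos _ r hrp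
    have h4 : ell u (N/2)^2 ≤ (u r)^2 / r ^ N := by
      calc ell u (N/2)^2 ≤ (u r / r^(N/2))^2 :=
            pow_le_pow_left₀ (ell_nonneg u hpos _) h3 2
        _ = (u r)^2 / r ^ N := by
            rw [div_pow, ← Real.rpow_natCast (r ^ (N/2)) 2, ← Real.rpow_mul hrp.le]
            norm_num
    calc ell u (N/2)^2 ≤ (u r)^2 / r^N := h4
      _ ≤ (u r1 * u r2) / (r2^N / 2^(k*N)) :=
          div_le_div₀ (mul_nonneg (hpos r1 hr1.le).le (hpos r2 hr2.le).le) hu2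
            (div_pos (Real.rpow_pos_of_pos hr2 N) (Real.rpow_pos_of_pos two_pos _)) hrN
      _ = u r1 * (u r2 / r2^N) * 2^(k*N) := by
          rw [div_div_eq_mul_div]
          field_simp
  have step1 : ∀ r2 > 0, ell u (N/2)^2 ≤ 2^(k*N) * (ell u 0 * (u r2 / r2 ^ N)) := by
    intro r2 hr2
    have hb : (0:ℝ) < u r2 / r2 ^ N * 2 ^ (k*N) := by
      have := hpos r2 hr2.le
      positivity
    have h5 : ell u (N/2)^2 / (u r2 / r2^N * 2^(k*N)) ≤ ell u 0 := by
      refine le_ciInf fun r1 => ?_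
      rw [Real.rpow_zero, div_one, div_le_iff₀ hb]
      calc ell u (N/2)^2 ≤ u r1 * (u r2 / r2 ^ N) * 2 ^ (k * N) := claim r1 r1.2 r2 hr2
        _ = u r1 * (u r2 / r2 ^ N * 2 ^ (k * N)) := by ring
    rw [div_le_iff₀ hb] at h5
    calc ell u (N/2)^2 ≤ ell u 0 * (u r2 / r2^N * 2^(k*N)) := h5
      _ = 2^(k*N) * (ell u 0 * (u r2 / r2 ^ N)) := by ring
  rcases eq_or_lt_of_le (ell_nonneg u hpos 0) with h0 | h0
  · have h1 := step1 1 one_pos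
    rw [← h0] at h1
    have he : ell u (N/2)^2 ≤ 0 := by simpa using h1
    have h2 : (0:ℝ) ≤ 2^(k*N) * (ell u 0 * ell u N) :=
      mul_nonneg (Real.rpow_nonneg (by norm_num) _)
        (mul_nonneg (ell_nonneg u hpos 0) (ell_nonneg u hpos N))
    linarith
  · have h6 : ell u (N/2)^2 / (2^(k*N) * ell u 0) ≤ ell u N := by
      refine le_ciInf fun r2 => ?_
      rw [div_le_iff₀ (mul_pos (Real.rpow_pos_of_pos two_pos _) h0)]
      calc ell u (N/2)^2 ≤ 2^(k*N) * (ell u 0 * (u r2 / r2 ^ N)) := step1 r2 r2.2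
        _ = u r2 / r2 ^ N * (2^(k*N) * ell u 0) := by ring
    rw [div_le_iff₀ (mul_pos (Real.rpow_pos_of_pos two_pos _) h0)] at h6
    calc ell u (N/2)^2 ≤ ell u N * (2^(k*N) * ell u 0) := h6
      _ = 2^(k*N) * (ell u 0 * ell u N) := by ring

set_option maxHeartbeats 1000000 in
theorem L_function_square_bound (u : ℝ → ℝ) (k : ℝ) (hk : 0 < k)
    (hpos : ∀ r ≥ 0, 0 < u r)
    (hcont : ContinuousOn u (Set.Ici 0))
    (hlim : Filter.Tendsto (fun r => Real.log (u r) / Real.log r)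
      Filter.atTop Filter.atTop)
    (hconv : ConvexOn ℝ (Set.Ici 0) (fun x : ℝ => Real.log (u (x ^ k))))
    (hsum : ∀ r ≥ (0 : ℝ), Summable (fun n : ℕ => ell u n * r ^ n)) :
    ∀ r ≥ (0 : ℝ),
      (∑' n : ℕ, ell u n * r ^ n) ^ 2
        ≤ ell u 0 * ∑' n : ℕ, ell u n * ((2 : ℝ) ^ (k + 1) * r) ^ n := by
  intro r hr
  set s := (2:ℝ)^(k+1) * r with hs
  have hs0 : (0:ℝ) ≤ s := mul_nonneg (Real.rpow_nonneg (by norm_num) _) hr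
  have ha : Summable (fun n : ℕ => ell u n * r ^ n) := hsum r hr
  have hb : Summable (fun n : ℕ => ell u n * s ^ n) := hsum s hs0
  have hnn : ∀ n : ℕ, 0 ≤ ell u n * r ^ n := fun n =>
    mul_nonneg (ell_nonneg u hpos n) (pow_nonneg hr n)
  have han : Summable (fun n : ℕ => ‖ell u n * r ^ n‖) :=
    ha.congr fun n => (Real.norm_of_nonneg (hnn n)).symm
  have hC : ((∑' n : ℕ, ell u n * r ^ n) * ∑' n : ℕ, ell u n * r ^ n)
      = ∑' n : ℕ, ∑ p ∈ Finset.HasAntidiagonal.antidiagonal n,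
          (ell u p.1 * r ^ p.1) * (ell u p.2 * r ^ p.2) :=
    tsum_mul_tsum_eq_tsum_sum_antidiagonal_of_summable_norm han han
  have key : ∀ n : ℕ,
      ∑ p ∈ Finset.HasAntidiagonal.antidiagonal n, (ell u p.1 * r ^ p.1) * (ell u p.2 * r ^ p.2)
        ≤ ell u 0 * (ell u n * s ^ n) := by
    intro n
    have hbnd : ∀ p ∈ Finset.HasAntidiagonal.antidiagonal n,
        (ell u p.1 * r ^ p.1) * (ell u p.2 * r ^ p.2)
          ≤ 2 ^ (k * (n:ℝ)) * (ell u 0 * ell u n) * r ^ n := by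
      intro p hp
      have hpn : p.1 + p.2 = n := Finset.HasAntidiagonal.mem_antidiagonal.mp hp
      have h3 : ((p.1:ℝ) + (p.2:ℝ)) = (n:ℝ) := by exact_mod_cast congrArg (Nat.cast : ℕ → ℝ) hpn
      have h1 : ell u p.1 * ell u p.2 ≤ ell u (((p.1:ℝ) + (p.2:ℝ))/2) ^ 2 :=
        ell_mul_ell_le u hpos _ _
      have h2 : ell u (((n:ℝ))/2) ^ 2 ≤ 2 ^ (k * (n:ℝ)) * (ell u 0 * ell u (n:ℝ)) :=
        sq_ell_half_le u k hk hpos hconv _ (Nat.cast_nonneg n)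
      rw [h3] at h1
      calc (ell u p.1 * r ^ p.1) * (ell u p.2 * r ^ p.2)
          = (ell u p.1 * ell u p.2) * r ^ n := by rw [← hpn, pow_add]; ring
        _ ≤ (2 ^ (k * (n:ℝ)) * (ell u 0 * ell u n)) * r ^ n :=
            mul_le_mul_of_nonneg_right (h1.trans h2) (pow_nonneg hr n)
    have hpow : (2:ℝ)^(n:ℕ) * 2 ^ (k*(n:ℝ)) = ((2:ℝ)^(k+1))^(n:ℕ) := by
      rw [← Real.rpow_natCast (2:ℝ) n, ← Real.rpow_add two_pos,
        ← Real.rpow_natCast ((2:ℝ)^(k+1)) n, ← Real.rpow_mul (by norm_num : (0:ℝ) ≤ 2)]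
      congr 1
      ring
    calc ∑ p ∈ Finset.HasAntidiagonal.antidiagonal n, (ell u p.1 * r ^ p.1) * (ell u p.2 * r ^ p.2)
        ≤ (Finset.HasAntidiagonal.antidiagonal n).card •
            (2 ^ (k * (n:ℝ)) * (ell u 0 * ell u n) * r ^ n) :=
          Finset.sum_le_card_nsmul _ _ _ hbnd
      _ = ((n:ℝ)+1) * (2 ^ (k * (n:ℝ)) * (ell u 0 * ell u n) * r ^ n) := by
          rw [Finset.Nat.card_antidiagonal, nsmul_eq_mul]
          push_cast
          ring
      _ ≤ (2:ℝ)^(n:ℕ) * (2 ^ (k * (n:ℝ)) * (ell u 0 * ell u n) * r ^ n) := by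
          refine mul_le_mul_of_nonneg_right ?_ ?_
          · exact_mod_cast Nat.succ_le_of_lt (Nat.lt_two_pow_self (n := n))
          · have h0 := ell_nonneg u hpos 0
            have hn0 := ell_nonneg u hpos n
            positivity
      _ = ell u 0 * (ell u n * s ^ n) := by
          rw [hs, mul_pow, ← hpow]
          ring
  have hsum_lhs : Summable (fun n : ℕ => ∑ p ∈ Finset.HasAntidiagonal.antidiagonal n,
      (ell u p.1 * r ^ p.1) * (ell u p.2 * r ^ p.2)) :=
    (hb.mul_left (ell u 0)).of_nonneg_of_le
      (fun n => Finset.sum_nonneg fun p _ => mul_nonneg (hnn p.1) (hnn p.2)) key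
  have hsum_rhs : Summable (fun n : ℕ => ell u 0 * (ell u n * s ^ n)) := hb.mul_left _
  rw [sq, hC]
  exact (Summable.tsum_le_tsum key hsum_lhs hsum_rhs).trans_eq tsum_mul_left
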